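/- arXiv:2106.14768 — 3 statements merged into one kernel-verified Lean document; each statement's English description precedes it below -/
import Mathlib

section
/- For all nonzero ξ₁, ξ₂ ∈ ℝ³ and every z ∈ ℂ⁴, one has |Π(ξ₁) Π(−ξ₂) z| ≲ |z| · ∠(ξ₁, ξ₂), where ∠(ξ₁, ξ₂) denotes the angle between ξ₁ and ξ₂ and the implicit constant is absolute. -/
open Matrix Complex

/-- The Pauli matrices σ¹, σ², σ³. -/
noncomputable def pauli : Fin 3 → Matrix (Fin 2) (Fin 2) ℂ
  | 0 => !![0, 1; 1, 0]
  | 1 => !![0, -Complex.I; Complex.I, 0]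
  | 2 => !![1, 0; 0, -1]

/-- The 4×4 Dirac matrices α^j = [[0, σ^j],[σ^j, 0]]. -/
noncomputable def dirac (j : Fin 3) : Matrix (Fin 2 ⊕ Fin 2) (Fin 2 ⊕ Fin 2) ℂ :=
  Matrix.fromBlocks 0 (pauli j) (pauli j) 0

/-- Π(ξ) = (1/2)(I + ξ_j α^j / |ξ|). -/
noncomputable def diracProj (ξ : EuclideanSpace ℝ (Fin 3)) :
    Matrix (Fin 2 ⊕ Fin 2) (Fin 2 ⊕ Fin 2) ℂ :=
  (1 / 2 : ℂ) • (1 + ‖ξ‖⁻¹ • ∑ j, (ξ j : ℂ) • dirac j)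

noncomputable def Sm (v : Fin 3 → ℝ) : Matrix (Fin 2 ⊕ Fin 2) (Fin 2 ⊕ Fin 2) ℂ :=
  ∑ j, (v j : ℂ) • dirac j

noncomputable def Pm (v : Fin 3 → ℝ) : Matrix (Fin 2) (Fin 2) ℂ :=
  !![(v 2 : ℂ), v 0 - v 1 * Complex.I; v 0 + v 1 * Complex.I, -v 2]

lemma Sm_eq (v : Fin 3 → ℝ) : Sm v = Matrix.fromBlocks 0 (Pm v) (Pm v) 0 := by
  ext i j
  rcases i with i | i <;> rcases j with j | j <;> fin_cases i <;> fin_cases j <;>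
    simp [Sm, Fin.sum_univ_three, dirac, pauli, Pm] <;> ring

lemma Pm_mul_Pm (v : Fin 3 → ℝ) :
    Pm v * Pm v = ((∑ j, v j ^ 2 : ℝ) : ℂ) • 1 := by
  ext i j
  fin_cases i <;> fin_cases j <;>
    · simp [Pm, Matrix.mul_apply, Fin.sum_univ_two, Fin.sum_univ_three, Matrix.one_apply]
      try push_cast
      try ring_nf
      try simp [Complex.I_sq]
      try ring

lemma Sm_mul_Sm (v : Fin 3 → ℝ) :
    Sm v * Sm v = ((∑ j, v j ^ 2 : ℝ) : ℂ) • 1 := by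
  rw [Sm_eq, Matrix.fromBlocks_multiply, Pm_mul_Pm]
  simp [Matrix.fromBlocks_smul, ← Matrix.fromBlocks_one]

lemma Sm_conjTranspose (v : Fin 3 → ℝ) : (Sm v)ᴴ = Sm v := by
  rw [Sm_eq, Matrix.fromBlocks_conjTranspose]
  have h : (Pm v)ᴴ = Pm v := by
    ext i j
    fin_cases i <;> fin_cases j <;> simp [Pm, Matrix.conjTranspose_apply] <;> ring
  simp [h]

lemma Sm_add (v w : Fin 3 → ℝ) : Sm (v + w) = Sm v + Sm w := by
  simp [Sm, ← Finset.sum_add_distrib, add_smul]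

lemma Sm_neg (v : Fin 3 → ℝ) : Sm (-v) = -Sm v := by
  simp [Sm, ← Finset.sum_neg_distrib, neg_smul]

lemma Sm_sub (v w : Fin 3 → ℝ) : Sm (v - w) = Sm v - Sm w := by
  simp [sub_eq_add_neg, Sm_add, Sm_neg]

open scoped Matrix.Norms.L2Operator

lemma norm_one_mat : ‖(1 : Matrix (Fin 2 ⊕ Fin 2) (Fin 2 ⊕ Fin 2) ℂ)‖ = 1 := by
  rw [Matrix.cstar_norm_def, _root_.map_one]
  exact ContinuousLinearMap.norm_id

lemma norm_Sm (v : Fin 3 → ℝ) : ‖Sm v‖ = Real.sqrt (∑ j, v j ^ 2) := by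
  have h : ‖Sm v‖ * ‖Sm v‖ = ∑ j, v j ^ 2 := by
    rw [← Matrix.l2_opNorm_conjTranspose_mul_self, Sm_conjTranspose, Sm_mul_Sm,
      norm_smul, norm_one_mat, mul_one, Complex.norm_real, Real.norm_eq_abs]
    exact abs_of_nonneg (Finset.sum_nonneg fun j _ => sq_nonneg _)
  rw [← h]; exact (Real.sqrt_mul_self (norm_nonneg _)).symm


lemma diracProj_eq (ξ : EuclideanSpace ℝ (Fin 3)) :
    diracProj ξ = (1/2 : ℂ) • (1 + Sm (fun j => ‖ξ‖⁻¹ * ξ j)) := by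
  unfold diracProj Sm
  congr 2
  rw [Finset.smul_sum]
  refine Finset.sum_congr rfl fun j _ => ?_
  rw [← smul_assoc]
  congr 1
  rw [Complex.real_smul]
  push_cast
  ring

lemma sum_sq_unit (ξ : EuclideanSpace ℝ (Fin 3)) (hξ : ξ ≠ 0) :
    (∑ j, (‖ξ‖⁻¹ * ξ j) ^ 2) = 1 := by
  have hn : ‖ξ‖ ≠ 0 := norm_ne_zero_iff.mpr hξ
  have h2 : ∑ j, (ξ j) ^ 2 = ‖ξ‖ ^ 2 := by
    rw [EuclideanSpace.norm_eq, Real.sq_sqrt (by positivity)]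
    simp [Real.norm_eq_abs, sq_abs]
  simp only [mul_pow, ← Finset.mul_sum, h2]
  field_simp

lemma proj_zero (ξ : EuclideanSpace ℝ (Fin 3)) (hξ : ξ ≠ 0) :
    diracProj ξ * diracProj (-ξ) = 0 := by
  have hb : (fun j => ‖(-ξ : EuclideanSpace ℝ (Fin 3))‖⁻¹ * (-ξ : EuclideanSpace ℝ (Fin 3)) j)
      = -(fun j => ‖ξ‖⁻¹ * ξ j) := by
    funext j
    simp [norm_neg]
  rw [diracProj_eq, diracProj_eq, hb, Sm_neg]
  rw [smul_mul_assoc, mul_smul_comm, smul_smul]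
  have : (1 + Sm fun j => ‖ξ‖⁻¹ * ξ j) * (1 + -Sm fun j => ‖ξ‖⁻¹ * ξ j)
      = 1 - Sm (fun j => ‖ξ‖⁻¹ * ξ j) * Sm (fun j => ‖ξ‖⁻¹ * ξ j) := by
    noncomm_ring
  rw [this, Sm_mul_Sm, sum_sq_unit ξ hξ]
  simp

lemma proj_norm_le (ξ : EuclideanSpace ℝ (Fin 3)) (hξ : ξ ≠ 0) : ‖diracProj ξ‖ ≤ 1 := by
  rw [diracProj_eq, norm_smul]
  have h1 : ‖Sm fun j => ‖ξ‖⁻¹ * ξ j‖ = 1 := by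
    rw [norm_Sm, sum_sq_unit ξ hξ, Real.sqrt_one]
  calc ‖(1/2 : ℂ)‖ * ‖1 + Sm fun j => ‖ξ‖⁻¹ * ξ j‖
      ≤ (1/2) * (‖(1 : Matrix (Fin 2 ⊕ Fin 2) (Fin 2 ⊕ Fin 2) ℂ)‖
          + ‖Sm fun j => ‖ξ‖⁻¹ * ξ j‖) := by
        gcongr
        · simp
        · exact norm_add_le _ _
    _ ≤ 1 := by rw [norm_one_mat, h1]; norm_num

/-- |Π(ξ₁) Π(−ξ₂) z| ≲ |z| ∠(ξ₁, ξ₂) for all nonzero ξ₁, ξ₂ ∈ ℝ³ and z ∈ ℂ⁴,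
with an absolute implicit constant. -/
theorem diracProj_null_structure :
    ∃ C > (0 : ℝ), ∀ (ξ₁ ξ₂ : EuclideanSpace ℝ (Fin 3)), ξ₁ ≠ 0 → ξ₂ ≠ 0 →
      ∀ z : EuclideanSpace ℂ (Fin 2 ⊕ Fin 2),
        ‖(WithLp.equiv 2 ((Fin 2 ⊕ Fin 2) → ℂ)).symm
            ((diracProj ξ₁ * diracProj (-ξ₂)).mulVec ((WithLp.equiv 2 _) z))‖
          ≤ C * ‖z‖ * InnerProductGeometry.angle ξ₁ ξ₂ := by
  refine ⟨1, one_pos, fun ξ₁ ξ₂ h1 h2 z => ?_⟩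
  set θ := InnerProductGeometry.angle ξ₁ ξ₂ with hθ
  have hθ0 : 0 ≤ θ := InnerProductGeometry.angle_nonneg _ _
  have hn1 : ‖ξ₁‖ ≠ 0 := norm_ne_zero_iff.mpr h1
  have hn2 : ‖ξ₂‖ ≠ 0 := norm_ne_zero_iff.mpr h2
  set a : Fin 3 → ℝ := fun j => ‖ξ₁‖⁻¹ * ξ₁ j with ha
  set b : Fin 3 → ℝ := fun j => ‖ξ₂‖⁻¹ * ξ₂ j with hb
  -- cos θ = ∑ a j * b j
  have hcos : Real.cos θ = ∑ j, a j * b j := by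
    rw [hθ, InnerProductGeometry.cos_angle]
    have hinner : (inner ℝ ξ₁ ξ₂ : ℝ) = ∑ j, ξ₁ j * ξ₂ j := by
      simp [PiLp.inner_apply, RCLike.inner_apply, mul_comm]
    rw [hinner, ha, hb]
    rw [Finset.sum_div]
    refine Finset.sum_congr rfl fun j _ => ?_
    field_simp
    try ring
  have hsa : ∑ j, a j ^ 2 = 1 := sum_sq_unit ξ₁ h1
  have hsb : ∑ j, b j ^ 2 = 1 := sum_sq_unit ξ₂ h2
  have hsum : ∑ j, (a j - b j) ^ 2 = 2 - 2 * Real.cos θ := by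
    simp only [Fin.sum_univ_three] at hsa hsb hcos ⊢
    rw [hcos]
    ring_nf
    linear_combination hsa + hsb
  have hang : ∑ j, (a j - b j) ^ 2 ≤ θ ^ 2 := by
    have := Real.one_sub_sq_div_two_le_cos (x := θ)
    rw [hsum]; nlinarith
  have hSnorm : ‖Sm (a - b)‖ ≤ θ := by
    rw [norm_Sm]
    have : ∑ j, (a - b) j ^ 2 = ∑ j, (a j - b j) ^ 2 := by
      refine Finset.sum_congr rfl fun j _ => by simp
    rw [this]
    calc Real.sqrt (∑ j, (a j - b j) ^ 2) ≤ Real.sqrt (θ ^ 2) := Real.sqrt_le_sqrt hang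
      _ = θ := Real.sqrt_sq hθ0
  -- the key factorization
  have key : diracProj ξ₁ * diracProj (-ξ₂)
      = (diracProj ξ₁ - diracProj ξ₂) * diracProj (-ξ₂) := by
    rw [sub_mul, proj_zero ξ₂ h2, sub_zero]
  have hdiff : diracProj ξ₁ - diracProj ξ₂ = (1/2 : ℂ) • Sm (a - b) := by
    rw [diracProj_eq, diracProj_eq, ← smul_sub, Sm_sub]
    congr 1
    abel
  have hMnorm : ‖diracProj ξ₁ * diracProj (-ξ₂)‖ ≤ θ := by
    rw [key]
    calc ‖(diracProj ξ₁ - diracProj ξ₂) * diracProj (-ξ₂)‖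
        ≤ ‖diracProj ξ₁ - diracProj ξ₂‖ * ‖diracProj (-ξ₂)‖ :=
          Matrix.l2_opNorm_mul _ _
      _ ≤ ((1/2) * θ) * 1 := by
          refine mul_le_mul ?_ (proj_norm_le _ (neg_ne_zero.mpr h2)) (norm_nonneg _) (by positivity)
          rw [hdiff, norm_smul]
          calc ‖(1/2 : ℂ)‖ * ‖Sm (a - b)‖ = (1/2) * ‖Sm (a - b)‖ := by norm_num
            _ ≤ (1/2) * θ := by gcongr
      _ ≤ θ := by linarith
  calc ‖(WithLp.equiv 2 ((Fin 2 ⊕ Fin 2) → ℂ)).symm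
          ((diracProj ξ₁ * diracProj (-ξ₂)).mulVec ((WithLp.equiv 2 _) z))‖
      ≤ ‖diracProj ξ₁ * diracProj (-ξ₂)‖ * ‖z‖ :=
        Matrix.l2_opNorm_mulVec _ z
    _ ≤ θ * ‖z‖ := by
        exact mul_le_mul_of_nonneg_right hMnorm (norm_nonneg _)
    _ = 1 * ‖z‖ * θ := by ring
end

section
/- For any nonzero ξ₁, ξ₂ ∈ ℝ³ and real τ₁, τ₂, setting ξ₃ = −(ξ₁+ξ₂) and τ₃ = −(τ₁+τ₂), the angle ∠(±₁ξ₁, ±₂ξ₂) between ±₁ξ₁ and ±₂ξ₂ satisfies, for any b ∈ [0, 1/2]: ∠(±₁ξ₁, ±₂ξ₂) ≲ (⟨−τ₁ ±₁ |ξ₁|⟩ / min(⟨ξ₁⟩, ⟨ξ₂⟩))^{1/2} + (⟨−τ₂ ±₂ |ξ₂|⟩ / min(⟨ξ₁⟩, ⟨ξ₂⟩))^{b} + (⟨|τ₃| − |ξ₃|⟩ / min(⟨ξ₁⟩, ⟨ξ₂⟩))^{1/2}. -/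
open InnerProductGeometry
open scoped RealInnerProductSpace

/-- The Japanese bracket ⟨x⟩ = (1 + |x|²)^{1/2} of a real number. -/
noncomputable def jb (x : ℝ) : ℝ := Real.sqrt (1 + x ^ 2)

lemma jb_sq (x : ℝ) : jb x ^ 2 = 1 + x ^ 2 := Real.sq_sqrt (by positivity)

lemma jb_nonneg (x : ℝ) : 0 ≤ jb x := Real.sqrt_nonneg _

lemma one_le_jb (x : ℝ) : 1 ≤ jb x := by
  nlinarith [jb_sq x, jb_nonneg x, sq_nonneg x]

lemma jb_pos (x : ℝ) : 0 < jb x := lt_of_lt_of_le zero_lt_one (one_le_jb x)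

lemma abs_le_jb (x : ℝ) : |x| ≤ jb x := by
  rw [jb, show (1 : ℝ) + x ^ 2 = 1 + |x| ^ 2 by rw [sq_abs]]
  nlinarith [Real.sq_sqrt (show (0:ℝ) ≤ 1 + |x|^2 by positivity),
    Real.sqrt_nonneg (1 + |x|^2), abs_nonneg x]

lemma jb_mono {u v : ℝ} (h : |u| ≤ |v|) : jb u ≤ jb v := by
  apply Real.sqrt_le_sqrt
  nlinarith [sq_abs u, sq_abs v, abs_nonneg u]

/-- `1 - cos θ ≥ 2θ²/π²` on `[0, π]`. -/
lemma two_mul_sq_div_pi_sq_le_one_sub_cos {θ : ℝ} (h0 : 0 ≤ θ) (h1 : θ ≤ Real.pi) :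
    2 / Real.pi ^ 2 * θ ^ 2 ≤ 1 - Real.cos θ := by
  have := Real.cos_le_one_sub_mul_cos_sq (x := θ) (by rwa [abs_of_nonneg h0])
  linarith

/-- √(x+y+z) ≤ √x + √y + √z for nonnegative reals. -/
lemma sqrt_add_three_le {x y z : ℝ} (hx : 0 ≤ x) (hy : 0 ≤ y) (hz : 0 ≤ z) :
    Real.sqrt (x + y + z) ≤ Real.sqrt x + Real.sqrt y + Real.sqrt z := by
  have hxx := Real.sq_sqrt hx
  have hyy := Real.sq_sqrt hy
  have hzz := Real.sq_sqrt hz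
  have h1 := Real.sqrt_nonneg x
  have h2 := Real.sqrt_nonneg y
  have h3 := Real.sqrt_nonneg z
  refine (Real.sqrt_le_left (by positivity)).mpr ?_
  nlinarith [mul_nonneg h1 h2, mul_nonneg h1 h3, mul_nonneg h2 h3]

/-- Core arithmetic combination step. -/
lemma combine_arith {θ r s S m : ℝ} (hθ0 : 0 ≤ θ) (hr1 : 1 ≤ r) (hs1 : 1 ≤ s)
    (hS0 : 0 ≤ S) (hm0 : 0 < m) (hmμ : m ≤ 2 * min r s)
    (h : 2 / Real.pi ^ 2 * θ ^ 2 * (2 * r * s) ≤ S * (2 * (r + s))) :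
    θ ^ 2 * m ≤ 100 * S := by
  have hπ : Real.pi < 3.15 := Real.pi_lt_d2
  have hπ0 : 0 < Real.pi := Real.pi_pos
  have h1 : θ ^ 2 * (r * s) ≤ Real.pi ^ 2 / 2 * (S * (r + s)) := by
    have h2 := mul_le_mul_of_nonneg_left h (by positivity : (0:ℝ) ≤ Real.pi ^ 2 / 4)
    calc θ ^ 2 * (r * s)
        = Real.pi ^ 2 / 4 * (2 / Real.pi ^ 2 * θ ^ 2 * (2 * r * s)) := by
          field_simp; ring
    _ ≤ Real.pi ^ 2 / 4 * (S * (2 * (r + s))) := h2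
    _ = Real.pi ^ 2 / 2 * (S * (r + s)) := by ring
  have hμ1 : 1 ≤ min r s := le_min hr1 hs1
  have step2 : (r + s) * min r s ≤ 2 * (r * s) := by
    rcases min_cases r s with ⟨h1, h2⟩ | ⟨h1, h2⟩ <;> rw [h1] <;> nlinarith
  have h3 : θ ^ 2 * min r s * (r + s) ≤ Real.pi ^ 2 * S * (r + s) := by
    nlinarith [mul_le_mul_of_nonneg_left step2 (sq_nonneg θ)]
  have h4 : θ ^ 2 * min r s ≤ Real.pi ^ 2 * S :=
    le_of_mul_le_mul_right h3 (by linarith)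
  have h5 : θ ^ 2 * m ≤ θ ^ 2 * (2 * min r s) :=
    mul_le_mul_of_nonneg_left hmμ (sq_nonneg θ)
  have hπ2 : Real.pi ^ 2 ≤ 10 := by nlinarith
  have h6 : Real.pi ^ 2 * S ≤ 10 * S := mul_le_mul_of_nonneg_right hπ2 hS0
  linarith

set_option maxHeartbeats 1000000 in
/-- The angle estimate: for nonzero ξ₁, ξ₂ ∈ ℝ³, real τ₁, τ₂, ξ₃ = −(ξ₁+ξ₂),
τ₃ = −(τ₁+τ₂), signs ±₁, ±₂ (encoded by e₁, e₂ ∈ {1,−1}) and any b ∈ [0,1/2]: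
∠(±₁ξ₁, ±₂ξ₂) ≲ (⟨−τ₁ ±₁ |ξ₁|⟩/min(⟨ξ₁⟩,⟨ξ₂⟩))^{1/2}
  + (⟨−τ₂ ±₂ |ξ₂|⟩/min(⟨ξ₁⟩,⟨ξ₂⟩))^{b} + (⟨|τ₃| − |ξ₃|⟩/min(⟨ξ₁⟩,⟨ξ₂⟩))^{1/2}. -/
theorem angle_estimate :
    ∃ C > (0 : ℝ), ∀ (e₁ e₂ : ℝ), (e₁ = 1 ∨ e₁ = -1) → (e₂ = 1 ∨ e₂ = -1) →
      ∀ (ξ₁ ξ₂ : EuclideanSpace ℝ (Fin 3)) (τ₁ τ₂ b : ℝ),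
        ξ₁ ≠ 0 → ξ₂ ≠ 0 → 0 ≤ b → b ≤ 1 / 2 →
        angle (e₁ • ξ₁) (e₂ • ξ₂) ≤
          C * ((jb (-τ₁ + e₁ * ‖ξ₁‖) / min (jb ‖ξ₁‖) (jb ‖ξ₂‖)) ^ ((1 : ℝ) / 2)
            + (jb (-τ₂ + e₂ * ‖ξ₂‖) / min (jb ‖ξ₁‖) (jb ‖ξ₂‖)) ^ b
            + (jb (|-(τ₁ + τ₂)| - ‖-(ξ₁ + ξ₂)‖) / min (jb ‖ξ₁‖) (jb ‖ξ₂‖)) ^ ((1 : ℝ) / 2)) := by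
  refine ⟨10, by norm_num, ?_⟩
  intro e₁ e₂ he₁ he₂ ξ₁ ξ₂ τ₁ τ₂ b hξ₁ hξ₂ hb0 hb2
  set r := ‖ξ₁‖ with hr_def
  set s := ‖ξ₂‖ with hs_def
  have hr : 0 < r := norm_pos_iff.mpr hξ₁
  have hs : 0 < s := norm_pos_iff.mpr hξ₂
  set m := min (jb r) (jb s) with hm_def
  have hm1 : (1:ℝ) ≤ m := le_min (one_le_jb r) (one_le_jb s)
  have hm0 : (0:ℝ) < m := lt_of_lt_of_le one_pos hm1
  set a := -τ₁ + e₁ * r with ha_def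
  set c := -τ₂ + e₂ * s with hc_def
  set d := |-(τ₁ + τ₂)| - ‖-(ξ₁ + ξ₂)‖ with hd_def
  set A := jb a / m with hA_def
  set B := jb c / m with hB_def
  set D := jb d / m with hD_def
  have hA0 : 0 < A := div_pos (jb_pos a) hm0
  have hB0 : 0 < B := div_pos (jb_pos c) hm0
  have hD0 : 0 < D := div_pos (jb_pos d) hm0
  set θ := angle (e₁ • ξ₁) (e₂ • ξ₂) with hθ_def
  have hθ0 : 0 ≤ θ := angle_nonneg _ _
  have hθπ : θ ≤ Real.pi := angle_le_pi _ _
  have hπ : Real.pi < 3.15 := Real.pi_lt_d2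
  have hrpowA : 0 ≤ A ^ ((1:ℝ)/2) := Real.rpow_nonneg hA0.le _
  have hrpowB : 0 ≤ B ^ b := Real.rpow_nonneg hB0.le _
  have hrpowD : 0 ≤ D ^ ((1:ℝ)/2) := Real.rpow_nonneg hD0.le _
  have he₁abs : |e₁| = 1 := by rcases he₁ with h | h <;> rw [h] <;> norm_num
  have he₂abs : |e₂| = 1 := by rcases he₂ with h | h <;> rw [h] <;> norm_num
  have he₁sq : e₁ ^ 2 = 1 := by rcases he₁ with h | h <;> rw [h] <;> norm_num
  have he₂sq : e₂ ^ 2 = 1 := by rcases he₂ with h | h <;> rw [h] <;> norm_num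
  rcases lt_or_ge (min r s) 1 with hmin | hmin
  · -- degenerate case : min ⟨ξ₁⟩ ⟨ξ₂⟩ is bounded, so the third term is bounded below
    have hμ0 : 0 ≤ min r s := le_min hr.le hs.le
    have hm2 : m ≤ 2 := by
      have h1 : m ≤ jb (min r s) := by
        rcases min_cases r s with ⟨h1, _⟩ | ⟨h1, _⟩ <;> rw [h1]
        · exact min_le_left _ _
        · exact min_le_right _ _
      refine h1.trans ?_
      rw [jb, show (2:ℝ) = Real.sqrt 4 by
        rw [show (4:ℝ) = 2^2 by norm_num, Real.sqrt_sq (by norm_num)]]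
      have hsq : (min r s) ^ 2 ≤ 1 := by
        calc (min r s) ^ 2 ≤ 1 ^ 2 := by
              exact pow_le_pow_left₀ hμ0 hmin.le 2
        _ = 1 := one_pow 2
      exact Real.sqrt_le_sqrt (by linarith)
    have hDhalf : (1:ℝ)/2 ≤ D := by
      rw [hD_def, le_div_iff₀ hm0]
      linarith [one_le_jb d]
    have hDpow : (7:ℝ)/10 ≤ D ^ ((1:ℝ)/2) := by
      rw [← Real.sqrt_eq_rpow]
      have : Real.sqrt ((1:ℝ)/2) ≤ Real.sqrt D := Real.sqrt_le_sqrt hDhalf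
      refine le_trans ?_ this
      rw [show (7:ℝ)/10 = Real.sqrt ((7/10)^2) by rw [Real.sqrt_sq (by norm_num)]]
      exact Real.sqrt_le_sqrt (by norm_num)
    linarith
  · have hr1 : 1 ≤ r := le_trans (le_min_iff.mp hmin).1 le_rfl
    have hs1 : 1 ≤ s := (le_min_iff.mp hmin).2
    rcases lt_or_ge m (jb c) with hc | hc
    · -- case where the middle bracket dominates
      have hB1 : (1:ℝ) ≤ B := by rw [hB_def, le_div_iff₀ hm0]; linarith
      have hBb : (1:ℝ) ≤ B ^ b := by
        calc (1:ℝ) = B ^ (0:ℝ) := (Real.rpow_zero B).symm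
        _ ≤ B ^ b := Real.rpow_le_rpow_of_exponent_le hB1 hb0
      linarith
    · -- main case
      have hB1 : B ≤ 1 := (div_le_one hm0).mpr hc
      have hBb : B ^ ((1:ℝ)/2) ≤ B ^ b := Real.rpow_le_rpow_of_exponent_ge hB0 hB1 hb2
      set x := e₁ • ξ₁ with hx_def
      set y := e₂ • ξ₂ with hy_def
      have hxn : ‖x‖ = r := by
        rw [hx_def, norm_smul, Real.norm_eq_abs, he₁abs, one_mul]
      have hyn : ‖y‖ = s := by
        rw [hy_def, norm_smul, Real.norm_eq_abs, he₂abs, one_mul]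
      have hcos : ⟪x, y⟫ = Real.cos θ * (r * s) := by
        rw [← InnerProductGeometry.cos_angle_mul_norm_mul_norm, hxn, hyn]
      set q := ‖ξ₁ + ξ₂‖ with hq_def
      have hq0 : (0:ℝ) ≤ q := norm_nonneg _
      have hqrs : q ≤ r + s := norm_add_le _ _
      have he₁mul : e₁ * e₁ = 1 := by rcases he₁ with h | h <;> rw [h] <;> norm_num
      have he₂mul : e₂ * e₂ = 1 := by rcases he₂ with h | h <;> rw [h] <;> norm_num
      have hxy : ξ₁ + ξ₂ = e₁ • x + e₂ • y := by
        rw [hx_def, hy_def, smul_smul, smul_smul, he₁mul, he₂mul, one_smul, one_smul]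
      have hq2 : q ^ 2 = r ^ 2 + s ^ 2 + 2 * (e₁ * e₂) * (Real.cos θ * (r * s)) := by
        have h1 : ‖e₁ • x‖ = r := by
          rw [norm_smul, Real.norm_eq_abs, he₁abs, one_mul, hxn]
        have h2 : ‖e₂ • y‖ = s := by
          rw [norm_smul, Real.norm_eq_abs, he₂abs, one_mul, hyn]
        rw [hq_def, hxy, norm_add_sq_real, real_inner_smul_left, real_inner_smul_right,
          hcos, h1, h2]
        ring
      set σ := e₁ * r + e₂ * s with hσ_def
      have hσq : σ ^ 2 - q ^ 2 = e₁ * e₂ * (2 * r * s * (1 - Real.cos θ)) := by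
        rw [hq2, hσ_def]
        linear_combination r ^ 2 * he₁sq + s ^ 2 * he₂sq
      have hcos1 : Real.cos θ ≤ 1 := Real.cos_le_one θ
      have habs12 : |e₁ * e₂| = 1 := by rw [abs_mul, he₁abs, he₂abs]; norm_num
      have habs : |σ ^ 2 - q ^ 2| = 2 * r * s * (1 - Real.cos θ) := by
        rw [hσq, abs_mul, habs12, one_mul,
          abs_of_nonneg (mul_nonneg (by positivity) (by linarith [Real.cos_le_one θ]))]
      have hcosb := two_mul_sq_div_pi_sq_le_one_sub_cos hθ0 hθπ
      have hπ0 : (0:ℝ) < Real.pi := Real.pi_pos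
      -- lower bound for |σ² - q²|
      have key1 : 2 / Real.pi ^ 2 * θ ^ 2 * (2 * r * s) ≤ |σ ^ 2 - q ^ 2| := by
        rw [habs]
        calc 2 / Real.pi ^ 2 * θ ^ 2 * (2 * r * s)
            = (2 * r * s) * (2 / Real.pi ^ 2 * θ ^ 2) := by ring
        _ ≤ (2 * r * s) * (1 - Real.cos θ) :=
            mul_le_mul_of_nonneg_left hcosb (by positivity)
        _ = 2 * r * s * (1 - Real.cos θ) := by ring
      -- upper bound for |σ² - q²|
      have hS0 : (0:ℝ) ≤ |a| + |c| + |d| := by positivity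
      have hfac : σ ^ 2 - q ^ 2 = (|σ| - q) * (|σ| + q) := by
        rw [← sq_abs σ]; ring
      have hd' : d = |τ₁ + τ₂| - q := by rw [hd_def, abs_neg, norm_neg]
      have htri : |(|σ| - q)| ≤ |a| + |c| + |d| := by
        have h1 : |(|σ| - |τ₁ + τ₂|)| ≤ |σ - (τ₁ + τ₂)| := abs_abs_sub_abs_le_abs_sub _ _
        have h2 : σ - (τ₁ + τ₂) = a + c := by rw [ha_def, hc_def, hσ_def]; ring
        have h3 : |a + c| ≤ |a| + |c| := abs_add_le _ _
        have h4 : |(|σ| - q)| ≤ |(|σ| - |τ₁ + τ₂|)| + |(|τ₁ + τ₂| - q)| := abs_sub_le _ _ _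
        have h5 : |(|τ₁ + τ₂| - q)| = |d| := by rw [hd']
        rw [h2] at h1
        linarith [h1.trans h3, h4, h5.le, h5.ge]
      have hσle : |σ| ≤ r + s := by
        calc |σ| ≤ |e₁ * r| + |e₂ * s| := abs_add_le _ _
        _ = r + s := by rw [abs_mul, abs_mul, he₁abs, abs_of_nonneg hr.le,
            abs_of_nonneg hs.le, he₂abs, one_mul, one_mul]
      have key2 : |σ ^ 2 - q ^ 2| ≤ (|a| + |c| + |d|) * (2 * (r + s)) := by
        rw [hfac, abs_mul, abs_of_nonneg (by positivity : (0:ℝ) ≤ |σ| + q)]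
        exact mul_le_mul htri (by linarith) (by positivity) hS0
      -- combine
      have hminm : m ≤ 2 * min r s := by
        have h1 : m ≤ jb (min r s) := by
          rcases min_cases r s with ⟨h1, _⟩ | ⟨h1, _⟩ <;> rw [h1]
          · exact min_le_left _ _
          · exact min_le_right _ _
        refine h1.trans ?_
        have hμ1 : (1:ℝ) ≤ min r s := le_min hr1 hs1
        rw [jb, show 2 * min r s = Real.sqrt ((2 * min r s) ^ 2) by
          rw [Real.sqrt_sq (by positivity)]]
        refine Real.sqrt_le_sqrt ?_
        have hμsq : (1:ℝ) ≤ (min r s) ^ 2 := by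
          calc (1:ℝ) = 1 ^ 2 := (one_pow 2).symm
          _ ≤ (min r s) ^ 2 := pow_le_pow_left₀ zero_le_one hμ1 2
        have hexp : (2 * min r s) ^ 2 = 4 * (min r s) ^ 2 := by ring
        rw [hexp]; linarith
      have hθ2m : θ ^ 2 * m ≤ 100 * (|a| + |c| + |d|) :=
        combine_arith hθ0 hr1 hs1 hS0 hm0 hminm (key1.trans key2)
      have hθ2 : θ ^ 2 ≤ 100 * A + 100 * B + 100 * D := by
        have hSj : |a| + |c| + |d| ≤ jb a + jb c + jb d := by
          have h1 := abs_le_jb a; have h2 := abs_le_jb c; have h3 := abs_le_jb d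
          linarith
        have hAm : A * m = jb a := div_mul_cancel₀ _ hm0.ne'
        have hBm : B * m = jb c := div_mul_cancel₀ _ hm0.ne'
        have hDm : D * m = jb d := div_mul_cancel₀ _ hm0.ne'
        have h1 : θ ^ 2 * m ≤ (100 * A + 100 * B + 100 * D) * m := by
          rw [add_mul, add_mul, mul_assoc, mul_assoc, mul_assoc, hAm, hBm, hDm]
          linarith
        have := (mul_le_mul_iff_of_pos_right hm0).mp h1
        linarith
      calc θ = Real.sqrt (θ ^ 2) := (Real.sqrt_sq hθ0).symm
      _ ≤ Real.sqrt (100 * A + 100 * B + 100 * D) := Real.sqrt_le_sqrt hθ2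
      _ ≤ Real.sqrt (100 * A) + Real.sqrt (100 * B) + Real.sqrt (100 * D) :=
          sqrt_add_three_le (by positivity) (by positivity) (by positivity)
      _ = 10 * Real.sqrt A + 10 * Real.sqrt B + 10 * Real.sqrt D := by
          rw [Real.sqrt_mul (by norm_num : (0:ℝ) ≤ 100), Real.sqrt_mul (by norm_num : (0:ℝ) ≤ 100),
            Real.sqrt_mul (by norm_num : (0:ℝ) ≤ 100),
            show Real.sqrt 100 = 10 by rw [show (100:ℝ) = 10^2 by norm_num, Real.sqrt_sq (by norm_num)]]
      _ ≤ 10 * (A ^ ((1:ℝ)/2) + B ^ b + D ^ ((1:ℝ)/2)) := by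
          rw [Real.sqrt_eq_rpow A, Real.sqrt_eq_rpow D, Real.sqrt_eq_rpow B]
          linarith
end

section
/- For every l > 1/2 there exists C so that for all T ∈ ℕ and x ∈ ℝ², ∫_{{ξ ∈ ℝ² : ||ξ| − T| ≤ 1}} ⟨x − ξ⟩^{−2l} dξ ≤ C. -/
open MeasureTheory Real Set intervalIntegral

lemma vanish_out (M y : ℝ) (hy : y ∉ Set.Ioo (-M) M) : (Real.sqrt (M - |y|))⁻¹ = 0 := by
  have : M - |y| ≤ 0 := by
    simp only [Set.mem_Ioo, not_and_or, not_lt] at hy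
    rcases hy with h | h
    · have h2 : M ≤ -y := by linarith
      have := neg_le_abs y; linarith
    · have := le_abs_self y; linarith
  rw [Real.sqrt_eq_zero_of_nonpos this, inv_zero]

lemma piece_int (M : ℝ) (hM : 0 < M) :
    ∫ y in (0:ℝ)..M, (Real.sqrt (M - y))⁻¹ = 2 * Real.sqrt M := by
  have h1 : ∫ y in (0:ℝ)..M, (Real.sqrt (M - y))⁻¹ = ∫ y in (0:ℝ)..M, (M - y) ^ (-(1/2) : ℝ) := by
    apply intervalIntegral.integral_congr
    intro y hy
    rw [Set.uIcc_of_le hM.le] at hy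
    have h0 : (0:ℝ) ≤ M - y := by simp at hy; linarith [hy.2]
    simp only
    rw [Real.rpow_neg h0, ← Real.sqrt_eq_rpow]
  rw [h1, intervalIntegral.integral_comp_sub_left (fun x => x ^ (-(1/2):ℝ)) M]
  rw [sub_self, sub_zero, integral_rpow (Or.inl (by norm_num))]
  norm_num
  rw [← Real.sqrt_eq_rpow]
  ring

lemma piece_integrable (M : ℝ) (hM : 0 < M) :
    IntervalIntegrable (fun y => (Real.sqrt (M - y))⁻¹) volume 0 M := by
  have h : IntervalIntegrable (fun x : ℝ => x ^ (-(1/2):ℝ)) volume 0 M :=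
    intervalIntegrable_rpow' (by norm_num)
  have h2 := (h.comp_sub_left M)
  rw [sub_self, sub_zero] at h2
  apply h2.symm.congr_ae
  rw [Filter.EventuallyEq, ae_restrict_iff' measurableSet_uIoc]
  filter_upwards with y hy
  rw [Set.uIoc_of_le hM.le] at hy
  have h0 : (0:ℝ) ≤ M - y := by simp at hy; linarith [hy.2]
  have h0 : (0:ℝ) ≤ M - y := by rw [Set.mem_Ioc] at hy; linarith [hy.2]
  rw [Real.rpow_neg h0, ← Real.sqrt_eq_rpow]

lemma sqrt_int_bound (M : ℝ) (hM : 1 ≤ M) :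
    ∫⁻ y : ℝ, ENNReal.ofReal ((Real.sqrt (M - |y|))⁻¹) ≤ ENNReal.ofReal (4 * Real.sqrt M) := by
  have hM0 : (0:ℝ) < M := by linarith
  have hind : (fun y : ℝ => ENNReal.ofReal ((Real.sqrt (M - |y|))⁻¹))
      = (Set.Ioo (-M) M).indicator (fun y => ENNReal.ofReal ((Real.sqrt (M - |y|))⁻¹)) := by
    funext y
    by_cases hy : y ∈ Set.Ioo (-M) M
    · rw [Set.indicator_of_mem hy]
    · rw [Set.indicator_of_notMem hy, vanish_out M y hy, ENNReal.ofReal_zero]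
  rw [hind, lintegral_indicator measurableSet_Ioo]
  have hsub : Set.Ioo (-M) M ⊆ Set.Ioc (-M) 0 ∪ Set.Ioc 0 M := by
    intro y hy
    rcases le_or_gt y 0 with h | h
    · exact Or.inl ⟨hy.1, h⟩
    · exact Or.inr ⟨h, hy.2.le⟩
  refine le_trans (lintegral_mono_set hsub) ?_
  rw [lintegral_union measurableSet_Ioc (by
    rw [Set.disjoint_left]; rintro y ⟨_, h1⟩ ⟨h2, _⟩; linarith)]
  have hp2 : ∫⁻ y in Set.Ioc (0:ℝ) M, ENNReal.ofReal ((Real.sqrt (M - |y|))⁻¹)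
      = ENNReal.ofReal (2 * Real.sqrt M) := by
    rw [setLIntegral_congr_fun measurableSet_Ioc
      (fun y (hy : y ∈ Set.Ioc (0:ℝ) M) => by
        rw [abs_of_pos hy.1])]
    rw [← ofReal_integral_eq_lintegral_ofReal
      ((intervalIntegrable_iff_integrableOn_Ioc_of_le hM0.le).mp (piece_integrable M hM0))
      (Filter.Eventually.of_forall (fun y => inv_nonneg.mpr (Real.sqrt_nonneg _)))]
    rw [← intervalIntegral.integral_of_le hM0.le, piece_int M hM0]
  have hp1 : ∫⁻ y in Set.Ioc (-M) (0:ℝ), ENNReal.ofReal ((Real.sqrt (M - |y|))⁻¹)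
      = ENNReal.ofReal (2 * Real.sqrt M) := by
    rw [setLIntegral_congr_fun measurableSet_Ioc
      (fun y (hy : y ∈ Set.Ioc (-M) (0:ℝ)) => by
        rw [abs_of_nonpos hy.2, sub_neg_eq_add])]
    have hii : IntervalIntegrable (fun y : ℝ => (Real.sqrt (M + y))⁻¹) volume (-M) 0 := by
      have := (IntervalIntegrable.iff_comp_neg).mp (piece_integrable M hM0)
      simp only [neg_zero] at this
      apply this.symm.congr_ae
      apply Filter.Eventually.of_forall
      intro y; simp only [sub_neg_eq_add]
    rw [← ofReal_integral_eq_lintegral_ofReal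
      ((intervalIntegrable_iff_integrableOn_Ioc_of_le (by linarith)).mp hii)
      (Filter.Eventually.of_forall (fun y => inv_nonneg.mpr (Real.sqrt_nonneg _)))]
    rw [← intervalIntegral.integral_of_le (by linarith : (-M:ℝ) ≤ 0)]
    have : ∫ y in (-M)..(0:ℝ), (Real.sqrt (M + y))⁻¹
        = ∫ y in (-M)..(0:ℝ), (fun t => (Real.sqrt (M - t))⁻¹) (-y) := by
      apply intervalIntegral.integral_congr
      intro y _; simp [sub_neg_eq_add]
    rw [this, intervalIntegral.integral_comp_neg (fun t => (Real.sqrt (M - t))⁻¹)]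
    simp only [neg_zero, neg_neg]
    rw [piece_int M hM0]
  rw [hp1, hp2, ← ENNReal.ofReal_add (by positivity) (by positivity)]
  apply ENNReal.ofReal_le_ofReal; ring_nf; exact le_refl _

lemma g_integrable (l : ℝ) (hl : 1/2 < l) :
    Integrable (fun y : ℝ => (2:ℝ)^l * (1 + |y|) ^ (-(2*l))) := by
  apply Integrable.const_mul
  have h := integrable_one_add_norm (E := ℝ) (μ := volume) (r := 2*l)
    (by rw [Module.finrank_self]; norm_num; linarith)
  simpa [Real.norm_eq_abs] using h

lemma g_pointwise (l : ℝ) (hl : 0 < l) (y : ℝ) :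
    (1 + y^2) ^ (-l) ≤ (2:ℝ)^l * (1 + |y|) ^ (-(2*l)) := by
  have h1 : (0:ℝ) < 1 + y^2 := by positivity
  have h2 : (0:ℝ) < 1 + |y| := by positivity
  have key : (1 + |y|) ^ (-(2*l)) = ((1 + |y|)^(2:ℕ)) ^ (-l) := by
    rw [← Real.rpow_natCast (1 + |y|) 2, ← Real.rpow_mul h2.le]
    norm_num
  rw [key]
  have hsq : ((1 + |y|)^(2:ℕ)) ≤ 2 * (1 + y^2) := by
    have := abs_nonneg y
    have h3 : |y|^2 = y^2 := sq_abs y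
    nlinarith [sq_nonneg (|y| - 1)]
  have hmono : (2 * (1 + y^2)) ^ (-l) ≤ ((1 + |y|)^(2:ℕ)) ^ (-l) := by
    apply Real.rpow_le_rpow_of_nonpos (by positivity) hsq (by linarith)
  have : (2 * (1 + y^2)) ^ (-l) = 2^(-l) * (1 + y^2)^(-l) := by
    rw [Real.mul_rpow (by norm_num) h1.le]
  rw [this] at hmono
  have h2l : (0:ℝ) < (2:ℝ)^l := Real.rpow_pos_of_pos (by norm_num) l
  calc (1 + y^2) ^ (-l) = (2:ℝ)^l * ((2:ℝ)^(-l) * (1 + y^2)^(-l)) := by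
        rw [← mul_assoc, ← Real.rpow_add (by norm_num : (0:ℝ)<2)]
        simp
    _ ≤ (2:ℝ)^l * ((1 + |y|)^(2:ℕ)) ^ (-l) := by
        apply mul_le_mul_of_nonneg_left hmono h2l.le

lemma g_lint_bound (l : ℝ) (hl : 1/2 < l) :
    ∃ K : ℝ, 0 ≤ K ∧
      ∫⁻ y : ℝ, ENNReal.ofReal ((1 + y^2) ^ (-l)) ≤ ENNReal.ofReal K := by
  refine ⟨∫ y : ℝ, (2:ℝ)^l * (1 + |y|) ^ (-(2*l)), integral_nonneg (fun y => by positivity), ?_⟩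
  rw [ofReal_integral_eq_lintegral_ofReal (g_integrable l hl)
    (Filter.Eventually.of_forall (fun y => by positivity))]
  apply lintegral_mono
  intro y
  exact ENNReal.ofReal_le_ofReal (g_pointwise l (by linarith) y)

set_option maxHeartbeats 1000000 in
lemma slice_bound (T : ℕ) (y : ℝ) :
    volume {x : ℝ | |Real.sqrt (x^2 + y^2) - (T:ℝ)| ≤ 1}
      ≤ ENNReal.ofReal (8 * Real.sqrt ((T:ℝ)+1) * (Real.sqrt (((T:ℝ)+1) - |y|))⁻¹) := by
  set M : ℝ := (T:ℝ) + 1 with hMdef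
  have hM1 : (1:ℝ) ≤ M := by
    have : (0:ℝ) ≤ (T:ℝ) := Nat.cast_nonneg T
    simp only [hMdef]; linarith
  have hM0 : (0:ℝ) < M := by linarith
  have hupper : ∀ x : ℝ, |Real.sqrt (x^2 + y^2) - (T:ℝ)| ≤ 1 → x^2 + y^2 ≤ M^2 := by
    intro x hx
    have h1 : Real.sqrt (x^2 + y^2) ≤ M := by
      have := abs_le.mp hx; linarith [this.2]
    have h2 : (0:ℝ) ≤ x^2 + y^2 := by positivity
    calc x^2 + y^2 = (Real.sqrt (x^2+y^2))^2 := (Real.sq_sqrt h2).symm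
      _ ≤ M^2 := by nlinarith [Real.sqrt_nonneg (x^2+y^2)]
  by_cases hy : M ≤ |y|
  · -- slice is contained in {0}
    have hsub : {x : ℝ | |Real.sqrt (x^2 + y^2) - (T:ℝ)| ≤ 1} ⊆ {(0:ℝ)} := by
      intro x hx
      have h1 := hupper x hx
      have : x^2 ≤ 0 := by nlinarith [abs_nonneg y, sq_abs y]
      have : x = 0 := by nlinarith [sq_nonneg x]
      simpa using this
    calc volume {x : ℝ | |Real.sqrt (x^2 + y^2) - (T:ℝ)| ≤ 1}
        ≤ volume {(0:ℝ)} := measure_mono hsub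
      _ = 0 := measure_singleton 0
      _ ≤ _ := zero_le
  push_neg at hy
  have hsy : (0:ℝ) < Real.sqrt (M - |y|) := Real.sqrt_pos.mpr (by linarith)
  have htM : (0:ℝ) < Real.sqrt M := Real.sqrt_pos.mpr hM0
  set R : ℝ := Real.sqrt (M^2 - y^2) with hRdef
  have hy2 : y^2 < M^2 := by nlinarith [abs_nonneg y, sq_abs y]
  have hR2 : R^2 = M^2 - y^2 := Real.sq_sqrt (by linarith)
  have hRpos : (0:ℝ) < R := Real.sqrt_pos.mpr (by linarith)
  have hRlow : Real.sqrt (M - |y|) * Real.sqrt M ≤ R := by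
    have h1 : M^2 - y^2 = (M - |y|) * (M + |y|) := by
      have := sq_abs y; nlinarith
    rw [hRdef, h1, Real.sqrt_mul (by linarith)]
    apply mul_le_mul_of_nonneg_left _ (Real.sqrt_nonneg _)
    exact Real.sqrt_le_sqrt (by linarith [abs_nonneg y])
  rcases Nat.eq_zero_or_pos T with hT | hT
  · -- T = 0 : slice inside Icc (-R) R, R ≤ 1, RHS ≥ 8
    have hsub : {x : ℝ | |Real.sqrt (x^2 + y^2) - (T:ℝ)| ≤ 1} ⊆ Set.Icc (-R) R := by
      intro x hx
      have h1 := hupper x hx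
      have h2 : x^2 ≤ R^2 := by nlinarith
      have hxR : |x| ≤ R := by
        rw [← Real.sqrt_sq_eq_abs]
        calc Real.sqrt (x^2) ≤ Real.sqrt (R^2) := Real.sqrt_le_sqrt h2
          _ = R := Real.sqrt_sq hRpos.le
      exact abs_le.mp hxR
    calc volume {x : ℝ | |Real.sqrt (x^2 + y^2) - (T:ℝ)| ≤ 1}
        ≤ volume (Set.Icc (-R) R) := measure_mono hsub
      _ = ENNReal.ofReal (R - (-R)) := Real.volume_Icc
      _ ≤ _ := by
          apply ENNReal.ofReal_le_ofReal
          have hR1 : R ≤ 1 := by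
            have : M = 1 := by simp [hMdef, hT]
            rw [← Real.sqrt_one]
            apply Real.sqrt_le_sqrt; nlinarith [sq_nonneg y]
          have hs1 : Real.sqrt (M - |y|) ≤ 1 := by
            have hMeq : M = 1 := by simp [hMdef, hT]
            rw [← Real.sqrt_one]; apply Real.sqrt_le_sqrt; rw [hMeq]; linarith [abs_nonneg y]
          have h8 : (8:ℝ) ≤ 8 * Real.sqrt M * (Real.sqrt (M - |y|))⁻¹ := by
            have hinv : (1:ℝ) ≤ (Real.sqrt (M - |y|))⁻¹ := by
              have := one_div_le_one_div_of_le hsy hs1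
              simpa using this
            have hsM : (1:ℝ) ≤ Real.sqrt M := by
              rw [← Real.sqrt_one]; exact Real.sqrt_le_sqrt hM1
            nlinarith
          linarith
  · -- T ≥ 1
    have hT1 : (1:ℝ) ≤ (T:ℝ) := by exact_mod_cast hT
    set r : ℝ := Real.sqrt (((T:ℝ)-1)^2 - y^2) with hrdef
    have hr0 : 0 ≤ r := Real.sqrt_nonneg _
    have hrR : r ≤ R := Real.sqrt_le_sqrt (by simp only [hMdef]; nlinarith)
    have hsub : {x : ℝ | |Real.sqrt (x^2 + y^2) - (T:ℝ)| ≤ 1}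
        ⊆ Set.Icc (-R) (-r) ∪ Set.Icc r R := by
      intro x hx
      have hx' : |Real.sqrt (x^2 + y^2) - (T:ℝ)| ≤ 1 := hx
      have h1 := hupper x hx'
      have hxR : |x| ≤ R := by
        have h2 : x^2 ≤ R^2 := by nlinarith
        rw [← Real.sqrt_sq_eq_abs]
        calc Real.sqrt (x^2) ≤ Real.sqrt (R^2) := Real.sqrt_le_sqrt h2
          _ = R := Real.sqrt_sq hRpos.le
      have hxr : r ≤ |x| := by
        have hlow : (T:ℝ) - 1 ≤ Real.sqrt (x^2 + y^2) := by
          have := abs_le.mp hx'; linarith [this.1]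
        have h3 : ((T:ℝ)-1)^2 ≤ x^2 + y^2 := by
          have h4 : (0:ℝ) ≤ (T:ℝ) - 1 := by linarith
          have h5 := pow_le_pow_left₀ h4 hlow 2
          rwa [Real.sq_sqrt (by positivity : (0:ℝ) ≤ x^2 + y^2)] at h5
        calc r ≤ Real.sqrt (x^2) := Real.sqrt_le_sqrt (by linarith)
          _ = |x| := Real.sqrt_sq_eq_abs x
      rcases le_or_gt 0 x with hx0 | hx0
      · right; rw [abs_of_nonneg hx0] at hxr hxR; exact ⟨hxr, hxR⟩
      · left; rw [abs_of_neg hx0] at hxr hxR; constructor <;> linarith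
    have hkey : 2 * (R - r) ≤ 8 * Real.sqrt M * (Real.sqrt (M - |y|))⁻¹ := by
      have hdiff : R^2 - r^2 ≤ 4 * M := by
        rcases le_or_gt 0 (((T:ℝ)-1)^2 - y^2) with h | h
        · have : r^2 = ((T:ℝ)-1)^2 - y^2 := Real.sq_sqrt h
          rw [hR2, this]; simp only [hMdef]; nlinarith
        · have : r = 0 := Real.sqrt_eq_zero_of_nonpos h.le
          rw [hR2, this]; simp only [hMdef]; nlinarith
      have hA : (R - r) * R ≤ 4 * M := by nlinarith
      have hst : (R - r) * (Real.sqrt (M - |y|) * Real.sqrt M) ≤ 4 * M := by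
        apply le_trans _ hA
        apply mul_le_mul_of_nonneg_left hRlow (by linarith)
      have hM_eq : M = Real.sqrt M * Real.sqrt M := (Real.mul_self_sqrt hM0.le).symm
      rw [mul_comm (8 * Real.sqrt M), ← div_eq_inv_mul, le_div_iff₀ hsy]
      nlinarith [hst, htM, hM_eq, hsy]
    calc volume {x : ℝ | |Real.sqrt (x^2 + y^2) - (T:ℝ)| ≤ 1}
        ≤ volume (Set.Icc (-R) (-r) ∪ Set.Icc r R) := measure_mono hsub
      _ ≤ volume (Set.Icc (-R) (-r)) + volume (Set.Icc r R) := measure_union_le _ _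
      _ = ENNReal.ofReal ((-r) - (-R)) + ENNReal.ofReal (R - r) := by
          rw [Real.volume_Icc, Real.volume_Icc]
      _ = ENNReal.ofReal (2 * (R - r)) := by
          rw [← ENNReal.ofReal_add (by linarith) (by linarith)]; ring_nf
      _ ≤ _ := ENNReal.ofReal_le_ofReal hkey

set_option maxHeartbeats 1000000 in
lemma core_bound (l : ℝ) (hl : 1/2 < l) :
    ∃ C : ℝ, 0 ≤ C ∧ ∀ T : ℕ,
      ∫⁻ p : ℝ × ℝ in {p : ℝ × ℝ | |Real.sqrt (p.1^2 + p.2^2) - (T:ℝ)| ≤ 1},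
        ENNReal.ofReal ((1 + p.2^2) ^ (-l)) ≤ ENNReal.ofReal C := by
  obtain ⟨K, hK0, hK⟩ := g_lint_bound l hl
  refine ⟨8 * Real.sqrt 2 * K + 32 * (4:ℝ)^l, by positivity, fun T => ?_⟩
  set M : ℝ := (T:ℝ) + 1 with hMdef
  have hM1 : (1:ℝ) ≤ M := by
    have : (0:ℝ) ≤ (T:ℝ) := Nat.cast_nonneg T
    simp only [hMdef]; linarith
  have hM0 : (0:ℝ) < M := by linarith
  set S : Set (ℝ × ℝ) := {p : ℝ × ℝ | |Real.sqrt (p.1^2 + p.2^2) - (T:ℝ)| ≤ 1} with hSdef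
  have hScont : Continuous fun p : ℝ × ℝ => |Real.sqrt (p.1^2 + p.2^2) - (T:ℝ)| := by
    fun_prop
  have hS : MeasurableSet S := by
    have : S = (fun p : ℝ × ℝ => |Real.sqrt (p.1^2 + p.2^2) - (T:ℝ)|) ⁻¹' (Set.Iic 1) := rfl
    rw [this]
    exact hScont.measurable measurableSet_Iic
  have hg_cont : Continuous fun y : ℝ => (1 + y^2) ^ (-l) := by
    apply Continuous.rpow_const (by fun_prop)
    intro y; left; positivity
  have hGmeas : Measurable fun p : ℝ × ℝ => ENNReal.ofReal ((1 + p.2^2) ^ (-l)) := by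
    have hc : Continuous fun p : ℝ × ℝ => (1 + p.2^2) ^ (-l) := hg_cont.comp continuous_snd
    exact (ENNReal.continuous_ofReal.comp hc).measurable
  have hIndMeas : Measurable (S.indicator fun p : ℝ × ℝ => ENNReal.ofReal ((1 + p.2^2) ^ (-l))) :=
    hGmeas.indicator hS
  rw [← lintegral_indicator hS, Measure.volume_eq_prod]
  rw [lintegral_prod_symm _ hIndMeas.aemeasurable]
  -- inner integral
  have hinner : ∀ y : ℝ, ∫⁻ x : ℝ, S.indicator (fun p : ℝ × ℝ => ENNReal.ofReal ((1 + p.2^2) ^ (-l))) (x, y)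
      ≤ ENNReal.ofReal ((1 + y^2) ^ (-l) * (8 * Real.sqrt M * (Real.sqrt (M - |y|))⁻¹)) := by
    intro y
    have heq : (fun x : ℝ => S.indicator (fun p : ℝ × ℝ => ENNReal.ofReal ((1 + p.2^2) ^ (-l))) (x, y))
        = ({x : ℝ | |Real.sqrt (x^2 + y^2) - (T:ℝ)| ≤ 1}).indicator
            (fun _ => ENNReal.ofReal ((1 + y^2) ^ (-l))) := by
      funext x
      by_cases hx : |Real.sqrt (x^2 + y^2) - (T:ℝ)| ≤ 1
      · rw [Set.indicator_of_mem (show (x, y) ∈ S from hx),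
          Set.indicator_of_mem (show x ∈ {x : ℝ | |Real.sqrt (x^2 + y^2) - (T:ℝ)| ≤ 1} from hx)]
      · rw [Set.indicator_of_notMem (show (x, y) ∉ S from hx),
          Set.indicator_of_notMem
            (show x ∉ {x : ℝ | |Real.sqrt (x^2 + y^2) - (T:ℝ)| ≤ 1} from hx)]
    rw [heq]
    have hslice : MeasurableSet {x : ℝ | |Real.sqrt (x^2 + y^2) - (T:ℝ)| ≤ 1} := by
      have : {x : ℝ | |Real.sqrt (x^2 + y^2) - (T:ℝ)| ≤ 1}
          = (fun x : ℝ => |Real.sqrt (x^2 + y^2) - (T:ℝ)|) ⁻¹' (Set.Iic 1) := rfl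
      rw [this]
      exact (by fun_prop : Continuous fun x : ℝ => |Real.sqrt (x^2 + y^2) - (T:ℝ)|).measurable
        measurableSet_Iic
    rw [lintegral_indicator hslice, setLIntegral_const]
    calc ENNReal.ofReal ((1 + y^2) ^ (-l)) * volume {x : ℝ | |Real.sqrt (x^2 + y^2) - (T:ℝ)| ≤ 1}
        ≤ ENNReal.ofReal ((1 + y^2) ^ (-l))
            * ENNReal.ofReal (8 * Real.sqrt M * (Real.sqrt (M - |y|))⁻¹) :=
          mul_le_mul_right (slice_bound T y) _
      _ = _ := by rw [← ENNReal.ofReal_mul (by positivity)]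
  refine le_trans (lintegral_mono hinner) ?_
  -- pointwise bound by sum
  set gc : ℝ := (1 + (M/2)^2) ^ (-l) with hgc
  have hptw : ∀ y : ℝ, (1 + y^2) ^ (-l) * (8 * Real.sqrt M * (Real.sqrt (M - |y|))⁻¹)
      ≤ 8 * Real.sqrt 2 * (1 + y^2) ^ (-l) + (8 * Real.sqrt M * gc) * (Real.sqrt (M - |y|))⁻¹ := by
    intro y
    have hg0 : (0:ℝ) ≤ (1 + y^2) ^ (-l) := by positivity
    have hinv0 : (0:ℝ) ≤ (Real.sqrt (M - |y|))⁻¹ := by positivity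
    rcases le_or_gt (|y|) (M/2) with hy | hy
    · have hs2 : Real.sqrt (M/2) ≤ Real.sqrt (M - |y|) := Real.sqrt_le_sqrt (by linarith)
      have hs2pos : (0:ℝ) < Real.sqrt (M/2) := Real.sqrt_pos.mpr (by linarith)
      have hinvle : (Real.sqrt (M - |y|))⁻¹ ≤ (Real.sqrt (M/2))⁻¹ := by
        have := one_div_le_one_div_of_le hs2pos hs2
        simpa [one_div] using this
      have hsqrtM : Real.sqrt M = Real.sqrt 2 * Real.sqrt (M/2) := by
        rw [← Real.sqrt_mul (by norm_num : (0:ℝ) ≤ 2) (M/2)]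
        congr 1
        ring
      have hB : 8 * Real.sqrt M * (Real.sqrt (M - |y|))⁻¹ ≤ 8 * Real.sqrt 2 := by
        calc 8 * Real.sqrt M * (Real.sqrt (M - |y|))⁻¹
            ≤ 8 * Real.sqrt M * (Real.sqrt (M/2))⁻¹ := by
              apply mul_le_mul_of_nonneg_left hinvle (by positivity)
          _ = 8 * Real.sqrt 2 * (Real.sqrt (M/2) * (Real.sqrt (M/2))⁻¹) := by
              rw [hsqrtM]; ring
          _ = 8 * Real.sqrt 2 := by rw [mul_inv_cancel₀ hs2pos.ne']; ring
      have h1 : (1 + y^2) ^ (-l) * (8 * Real.sqrt M * (Real.sqrt (M - |y|))⁻¹)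
          ≤ (1 + y^2) ^ (-l) * (8 * Real.sqrt 2) := mul_le_mul_of_nonneg_left hB hg0
      have h2 : (0:ℝ) ≤ (8 * Real.sqrt M * gc) * (Real.sqrt (M - |y|))⁻¹ := by
        have : (0:ℝ) ≤ gc := by rw [hgc]; positivity
        positivity
      linarith [h1, h2]
    · have hgle : (1 + y^2) ^ (-l) ≤ gc := by
        rw [hgc]
        apply Real.rpow_le_rpow_of_nonpos (by positivity) _ (by linarith)
        have : (M/2)^2 ≤ y^2 := by
          have h := pow_le_pow_left₀ (by linarith : (0:ℝ) ≤ M/2) hy.le 2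
          rwa [sq_abs] at h
        linarith
      have h1 : (1 + y^2) ^ (-l) * (8 * Real.sqrt M * (Real.sqrt (M - |y|))⁻¹)
          ≤ gc * (8 * Real.sqrt M * (Real.sqrt (M - |y|))⁻¹) := by
        apply mul_le_mul_of_nonneg_right hgle (by positivity)
      have h2 : (0:ℝ) ≤ 8 * Real.sqrt 2 * (1 + y^2) ^ (-l) := by positivity
      nlinarith [h1, h2]
  refine le_trans (lintegral_mono (fun y => ENNReal.ofReal_le_ofReal (hptw y))) ?_
  refine le_trans (lintegral_mono (fun y => ENNReal.ofReal_add_le)) ?_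
  have hmeas1 : Measurable fun y : ℝ => ENNReal.ofReal (8 * Real.sqrt 2 * (1 + y^2) ^ (-l)) :=
    (ENNReal.continuous_ofReal.comp (continuous_const.mul hg_cont)).measurable
  rw [lintegral_add_left hmeas1]
  have hpart1 : ∫⁻ y : ℝ, ENNReal.ofReal (8 * Real.sqrt 2 * (1 + y^2) ^ (-l))
      ≤ ENNReal.ofReal (8 * Real.sqrt 2 * K) := by
    have : ∀ y : ℝ, ENNReal.ofReal (8 * Real.sqrt 2 * (1 + y^2) ^ (-l))
        = ENNReal.ofReal (8 * Real.sqrt 2) * ENNReal.ofReal ((1 + y^2) ^ (-l)) := fun y =>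
      ENNReal.ofReal_mul (by positivity)
    rw [lintegral_congr this, lintegral_const_mul' _ _ ENNReal.ofReal_ne_top,
      ENNReal.ofReal_mul (by positivity : (0:ℝ) ≤ 8 * Real.sqrt 2)]
    exact mul_le_mul_right hK _
  have hpart2 : ∫⁻ y : ℝ, ENNReal.ofReal ((8 * Real.sqrt M * gc) * (Real.sqrt (M - |y|))⁻¹)
      ≤ ENNReal.ofReal (32 * (4:ℝ)^l) := by
    have hgc0 : (0:ℝ) ≤ gc := by rw [hgc]; positivity
    have : ∀ y : ℝ, ENNReal.ofReal ((8 * Real.sqrt M * gc) * (Real.sqrt (M - |y|))⁻¹)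
        = ENNReal.ofReal (8 * Real.sqrt M * gc) * ENNReal.ofReal ((Real.sqrt (M - |y|))⁻¹) :=
      fun y => ENNReal.ofReal_mul (by positivity)
    rw [lintegral_congr this, lintegral_const_mul' _ _ ENNReal.ofReal_ne_top]
    calc ENNReal.ofReal (8 * Real.sqrt M * gc) * ∫⁻ y : ℝ, ENNReal.ofReal ((Real.sqrt (M - |y|))⁻¹)
        ≤ ENNReal.ofReal (8 * Real.sqrt M * gc) * ENNReal.ofReal (4 * Real.sqrt M) :=
          mul_le_mul_right (sqrt_int_bound M hM1) _
      _ = ENNReal.ofReal (8 * Real.sqrt M * gc * (4 * Real.sqrt M)) :=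
          (ENNReal.ofReal_mul (by positivity)).symm
      _ ≤ ENNReal.ofReal (32 * (4:ℝ)^l) := by
          apply ENNReal.ofReal_le_ofReal
          have hMs : Real.sqrt M * Real.sqrt M = M := Real.mul_self_sqrt hM0.le
          have key : M * gc ≤ (4:ℝ)^l := by
            have h1 : gc ≤ ((M/2)^2) ^ (-l) := by
              rw [hgc]
              apply Real.rpow_le_rpow_of_nonpos (by positivity) (by linarith) (by linarith)
            have h2 : ((M/2)^2 : ℝ) ^ (-l) = (M/2) ^ (-(2*l)) := by
              rw [← Real.rpow_natCast (M/2) 2, ← Real.rpow_mul (by linarith)]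
              norm_num
            have h3 : ((M/2) : ℝ) ^ (-(2*l)) = M ^ (-(2*l)) * ((2:ℝ)^(2*l)) := by
              rw [div_rpow (by linarith) (by norm_num), div_eq_mul_inv,
                ← Real.rpow_neg (by norm_num : (0:ℝ) ≤ 2), neg_neg]
            have h4 : M * M ^ (-(2*l)) ≤ 1 := by
              have : M * M ^ (-(2*l)) = M ^ (1 + -(2*l)) := by
                rw [Real.rpow_add hM0, Real.rpow_one]
              rw [this]
              apply Real.rpow_le_one_of_one_le_of_nonpos hM1 (by linarith)
            have h5 : ((2:ℝ)^(2*l)) = (4:ℝ)^l := by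
              have h4eq : (4:ℝ) = (2:ℝ) ^ (2:ℝ) := by
                have he : (2:ℝ) ^ (2:ℝ) = (2:ℝ) ^ (2:ℕ) := by
                  rw [← Real.rpow_natCast (2:ℝ) 2]; norm_num
                rw [he]; norm_num
              rw [h4eq, ← Real.rpow_mul (by norm_num : (0:ℝ) ≤ 2)]
            calc M * gc ≤ M * ((M/2)^2) ^ (-l) :=
                  mul_le_mul_of_nonneg_left h1 hM0.le
              _ = M * (M ^ (-(2*l)) * ((2:ℝ)^(2*l))) := by rw [h2, h3]
              _ = (M * M ^ (-(2*l))) * ((2:ℝ)^(2*l)) := by ring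
              _ ≤ 1 * ((2:ℝ)^(2*l)) := by
                  apply mul_le_mul_of_nonneg_right h4 (by positivity)
              _ = (4:ℝ)^l := by rw [one_mul, h5]
          calc 8 * Real.sqrt M * gc * (4 * Real.sqrt M) = 32 * (M * gc) := by
                rw [show 8 * Real.sqrt M * gc * (4 * Real.sqrt M)
                  = 32 * ((Real.sqrt M * Real.sqrt M) * gc) by ring, hMs]
            _ ≤ 32 * (4:ℝ)^l := by linarith [key]
  calc _ ≤ ENNReal.ofReal (8 * Real.sqrt 2 * K) + ENNReal.ofReal (32 * (4:ℝ)^l) :=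
        add_le_add hpart1 hpart2
    _ = ENNReal.ofReal (8 * Real.sqrt 2 * K + 32 * (4:ℝ)^l) :=
        (ENNReal.ofReal_add (by positivity) (by positivity)).symm


set_option maxHeartbeats 1000000 in
/-- For every l > 1/2 there is a constant C such that uniformly in T ∈ ℕ and x ∈ ℝ²,
∫_{||ξ|−T|≤1} ⟨x−ξ⟩^{−2l} dξ ≤ C. -/
theorem annulus_convolution_bound_2d :
    ∀ l : ℝ, 1 / 2 < l → ∃ C : ℝ, ∀ (T : ℕ) (x : EuclideanSpace ℝ (Fin 2)),
      (∫ ξ in {ξ : EuclideanSpace ℝ (Fin 2) | |‖ξ‖ - (T : ℝ)| ≤ 1},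
        (1 + ‖x - ξ‖ ^ 2) ^ (-l)) ≤ C := by
  intro l hl
  obtain ⟨C, hC0, hC⟩ := core_bound l hl
  refine ⟨C, fun T x => ?_⟩
  set A : Set (EuclideanSpace ℝ (Fin 2)) := {ξ | |‖ξ‖ - (T:ℝ)| ≤ 1} with hA
  have hf_cont : Continuous fun ξ : EuclideanSpace ℝ (Fin 2) => (1 + ‖x - ξ‖ ^ 2) ^ (-l) := by
    apply Continuous.rpow_const (by fun_prop)
    intro ξ; left; positivity
  rw [MeasureTheory.integral_eq_lintegral_of_nonneg_ae
    (ae_of_all _ (fun ξ => by positivity))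
    (hf_cont.aestronglyMeasurable)]
  apply ENNReal.toReal_le_of_le_ofReal hC0
  -- transfer to ℂ
  set e : ℂ ≃ₗᵢ[ℝ] EuclideanSpace ℝ (Fin 2) := Complex.orthonormalBasisOneI.repr with hedef
  have he : MeasurePreserving e := e.measurePreserving
  have heemb : MeasurableEmbedding (e : ℂ → EuclideanSpace ℝ (Fin 2)) :=
    e.toHomeomorph.measurableEmbedding
  set w : ℂ := e.symm x with hw
  have hxw : x = e w := by rw [hw]; simp
  have step1 : ∫⁻ ξ in A, ENNReal.ofReal ((1 + ‖x - ξ‖ ^ 2) ^ (-l))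
      = ∫⁻ z in {z : ℂ | |‖z‖ - (T:ℝ)| ≤ 1},
          ENNReal.ofReal ((1 + ‖w - z‖ ^ 2) ^ (-l)) := by
    have hpre : (e : ℂ → EuclideanSpace ℝ (Fin 2)) ⁻¹' A
        = {z : ℂ | |‖z‖ - (T:ℝ)| ≤ 1} := by
      ext z
      simp only [hA, Set.mem_preimage, Set.mem_setOf_eq, e.norm_map]
    have := he.setLIntegral_comp_preimage_emb heemb
      (fun ξ => ENNReal.ofReal ((1 + ‖x - ξ‖ ^ 2) ^ (-l))) A
    rw [← this, hpre]
    apply lintegral_congr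
    intro z
    congr 2
    rw [hxw, ← e.map_sub, e.norm_map]
  rw [step1]
  -- rotation
  set d : ℂ := if w = 0 then 1 else w / ((‖w‖ : ℝ) : ℂ) with hd
  have hd1 : ‖d‖ = 1 := by
    rw [hd]
    split_ifs with h
    · simp
    · rw [norm_div]
      simp only [Complex.norm_real, norm_norm]
      rw [div_self (by simpa using h)]
  set c : Circle := ⟨d, mem_sphere_zero_iff_norm.mpr (by exact hd1)⟩ with hc
  have hrot : MeasurePreserving (rotation c) := (rotation c).measurePreserving
  have hrotemb : MeasurableEmbedding (rotation c : ℂ → ℂ) :=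
    (rotation c).toHomeomorph.measurableEmbedding
  have hdw : (starRingEnd ℂ) d * w = ((‖w‖ : ℝ) : ℂ) := by
    rw [hd]
    split_ifs with h
    · simp [h]
    · rw [map_div₀]
      simp only [Complex.conj_ofReal]
      rw [div_mul_eq_mul_div, mul_comm, Complex.mul_conj, Complex.normSq_eq_norm_sq]
      push_cast
      rw [sq, mul_div_assoc, div_self (Complex.ofReal_ne_zero.mpr (norm_ne_zero_iff.mpr h)),
        mul_one]
  -- apply the rotation change of variables
  have hcoe : (c : ℂ) = d := rfl
  have hpre2 : (rotation c : ℂ → ℂ) ⁻¹' {z : ℂ | |‖z‖ - (T:ℝ)| ≤ 1}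
      = {z : ℂ | |‖z‖ - (T:ℝ)| ≤ 1} := by
    ext z
    simp only [Set.mem_preimage, Set.mem_setOf_eq, rotation_apply, norm_mul, hcoe, hd1, one_mul]
  have step2 : ∫⁻ z in {z : ℂ | |‖z‖ - (T:ℝ)| ≤ 1},
        ENNReal.ofReal ((1 + ‖w - z‖ ^ 2) ^ (-l))
      = ∫⁻ z in {z : ℂ | |‖z‖ - (T:ℝ)| ≤ 1},
        ENNReal.ofReal ((1 + ‖((‖w‖ : ℝ) : ℂ) - z‖ ^ 2) ^ (-l)) := by
    rw [← hrot.setLIntegral_comp_preimage_emb hrotemb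
      (fun z => ENNReal.ofReal ((1 + ‖w - z‖ ^ 2) ^ (-l)))
      {z : ℂ | |‖z‖ - (T:ℝ)| ≤ 1}, hpre2]
    apply lintegral_congr
    intro z
    congr 3
    have hdd : d * (starRingEnd ℂ) d = 1 := by
      rw [Complex.mul_conj, Complex.normSq_eq_norm_sq, hd1]
      norm_num
    have : w - (rotation c) z = d * ((starRingEnd ℂ) d * w - z) := by
      rw [rotation_apply, hcoe, mul_sub, ← mul_assoc, hdd, one_mul]
    rw [this, norm_mul, hd1, one_mul, hdw]
  rw [step2]
  -- pointwise bound by a function of the imaginary part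
  have step3 : ∫⁻ z in {z : ℂ | |‖z‖ - (T:ℝ)| ≤ 1},
        ENNReal.ofReal ((1 + ‖((‖w‖ : ℝ) : ℂ) - z‖ ^ 2) ^ (-l))
      ≤ ∫⁻ z in {z : ℂ | |‖z‖ - (T:ℝ)| ≤ 1},
        ENNReal.ofReal ((1 + z.im ^ 2) ^ (-l)) := by
    apply lintegral_mono
    intro z
    apply ENNReal.ofReal_le_ofReal
    apply Real.rpow_le_rpow_of_nonpos (by positivity) _ (by linarith)
    have h1 : z.im ^ 2 ≤ ‖((‖w‖ : ℝ) : ℂ) - z‖ ^ 2 := by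
      rw [Complex.sq_norm, Complex.normSq_apply]
      simp only [Complex.sub_re, Complex.sub_im, Complex.ofReal_re, Complex.ofReal_im, zero_sub]
      nlinarith [sq_nonneg (‖w‖ - z.re)]
    linarith
  refine le_trans step3 ?_
  -- transfer to ℝ × ℝ
  have hRP : MeasurePreserving (Complex.measurableEquivRealProd.symm) :=
    Complex.volume_preserving_equiv_real_prod.symm Complex.measurableEquivRealProd
  have hRPemb : MeasurableEmbedding (Complex.measurableEquivRealProd.symm : ℝ × ℝ → ℂ) :=
    Complex.measurableEquivRealProd.symm.measurableEmbedding
  have step4 : ∫⁻ z in {z : ℂ | |‖z‖ - (T:ℝ)| ≤ 1},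
        ENNReal.ofReal ((1 + z.im ^ 2) ^ (-l))
      = ∫⁻ p in {p : ℝ × ℝ | |Real.sqrt (p.1^2 + p.2^2) - (T:ℝ)| ≤ 1},
        ENNReal.ofReal ((1 + p.2 ^ 2) ^ (-l)) := by
    rw [← hRP.setLIntegral_comp_preimage_emb hRPemb
      (fun z => ENNReal.ofReal ((1 + z.im ^ 2) ^ (-l)))
      {z : ℂ | |‖z‖ - (T:ℝ)| ≤ 1}]
    have hpre3 : (Complex.measurableEquivRealProd.symm : ℝ × ℝ → ℂ)
        ⁻¹' {z : ℂ | |‖z‖ - (T:ℝ)| ≤ 1}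
        = {p : ℝ × ℝ | |Real.sqrt (p.1^2 + p.2^2) - (T:ℝ)| ≤ 1} := by
      ext p
      simp only [Set.mem_preimage, Set.mem_setOf_eq, Complex.measurableEquivRealProd_symm_apply,
        Complex.norm_def, Complex.normSq_mk]
      rw [show p.1 * p.1 + p.2 * p.2 = p.1^2 + p.2^2 by ring]
    rw [hpre3]
    apply lintegral_congr
    intro p
    rfl
  rw [step4]
  exact hC T
end
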